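/- Let d ≥ 1 and let 0 ≤ β with β·d < 1. Then for every a priori probability measure α on {-1,0,1}, the soft-core Widom-Rowlinson model on ℤ^d satisfies the Dobrushin condition: c(γ) = sup_{i∈ℤ^d} Σ_{j≠i} C_{ij}(γ) < 1, where C_{ij}(γ) is the Dobrushin interdependence matrix of the single-site specification kernels γ_{{i}}(σ|ω) ∝ α(σ) exp(−β Σ_{j: |i−j|₁ = 1} 1[σ ω_j = −1]). -/

import Mathlib

open Real Filter Finset Topology

/-- The local state space `{-1, 0, 1}` of the Widom-Rowlinson model. -/
abbrev Spin : Finset ℤ := {-1, 0, 1}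

/-- A probability vector on `{-1, 0, 1}`, encoded as a function `ℤ → ℝ`
supported on `{-1, 0, 1}`. -/
def IsProbVec (ν : ℤ → ℝ) : Prop :=
  (∀ s, 0 ≤ ν s) ∧ (∀ s, s ∉ Spin → ν s = 0) ∧ ∑ s ∈ Spin, ν s = 1

/-- The site space `ℤ^d`. -/
abbrev Site (d : ℕ) := Fin d → ℤ

/-- The number of nearest neighbors `j ∼ i` of site `i` whose spin `ω j` clashes
with the spin value `σ` at `i` (i.e. `σ · ω j = -1`). The neighbors of `i` are
exactly the sites `i ± e_k`, `k = 1, …, d`. -/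
noncomputable def clashCount {d : ℕ} (i : Site d) (σ : ℤ) (ω : Site d → Spin) : ℝ :=
  ∑ k : Fin d, ∑ ε ∈ ({-1, 1} : Finset ℤ),
    (if σ * (ω (Function.update i k (i k + ε)) : ℤ) = -1 then (1 : ℝ) else 0)

/-- The single-site specification kernel of the soft-core Widom-Rowlinson model on
`ℤ^d`: `γ_{{i}}(σ | ω) ∝ α(σ) exp(-β · #{j ∼ i : σ ω_j = -1})`. -/
noncomputable def scKernel (β : ℝ) (α : ℤ → ℝ) {d : ℕ} (i : Site d)
    (ω : Site d → Spin) (σ : ℤ) : ℝ :=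
  α σ * Real.exp (-β * clashCount i σ ω) /
    ∑ σ' ∈ Spin, α σ' * Real.exp (-β * clashCount i σ' ω)

/-- Total variational distance between two probability vectors on `{-1, 0, 1}`. -/
noncomputable def tvDist (p q : ℤ → ℝ) : ℝ := (1 / 2) * ∑ s ∈ Spin, |p s - q s|

/-- The Dobrushin interdependence matrix
`C_{ij}(γ) = sup { ‖γ_{{i}}(·|ω) - γ_{{i}}(·|η)‖_TV : ω = η off j }`. -/
noncomputable def dobMatrix (β : ℝ) (α : ℤ → ℝ) {d : ℕ} (i j : Site d) : ℝ :=
  sSup {r : ℝ | ∃ ω η : Site d → Spin, (∀ k, k ≠ j → ω k = η k) ∧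
    r = tvDist (scKernel β α i ω) (scKernel β α i η)}

/-- The Dobrushin constant `c(γ) = sup_i Σ_{j ≠ i} C_{ij}(γ)`. -/
noncomputable def dobConstant (β : ℝ) (α : ℤ → ℝ) (d : ℕ) : ℝ :=
  ⨆ i : Site d, ∑' j : Site d, if j = i then 0 else dobMatrix β α i j

/-! ### Auxiliary lemmas -/

section Aux

lemma key_exp (t : ℝ) (h0 : 0 ≤ t) (h1 : t ≤ 1) :
    Real.exp t - 1 ≤ t / 2 * (Real.exp t + 1) := by
  have hb := Real.exp_bound' h0 h1 (n := 4) (by norm_num)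
  have h2 : Real.exp t ≤ 1 + t + t^2/2 + t^3/6 + t^4 * 5 / 96 := by
    refine hb.trans (le_of_eq ?_)
    simp [Finset.sum_range_succ, Nat.factorial]
    norm_num
  nlinarith [pow_nonneg h0 3, pow_nonneg h0 4, sq_nonneg t]

lemma abs_exp_sub_one (β r : ℝ) (hβ1 : β ≤ 1) (hr : |r| ≤ β) :
    |Real.exp r - 1| ≤ β / 2 * (1 + Real.exp r) := by
  rcases le_or_gt 0 r with h | h
  · have hrβ : r ≤ β := (le_abs_self r).trans hr
    have hk := key_exp r h (hrβ.trans hβ1)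
    have h1 : 1 ≤ Real.exp r := Real.one_le_exp h
    rw [abs_of_nonneg (by linarith)]
    nlinarith [Real.exp_pos r]
  · have hrβ : -r ≤ β := (neg_le_abs r).trans hr
    have hk := key_exp (-r) (by linarith) (hrβ.trans hβ1)
    have hx : Real.exp (-r) * Real.exp r = 1 := by
      rw [← Real.exp_add]; simp
    have h1 : Real.exp r < 1 := Real.exp_lt_one_iff.mpr h
    rw [abs_of_nonpos (by linarith)]
    nlinarith [Real.exp_pos r]

lemma abs_exp_sub_exp (β r s : ℝ) (hβ1 : β ≤ 1) (hr : |r| ≤ β) (hs : |s| ≤ β) :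
    |Real.exp s - Real.exp r| ≤
      β / 2 * (Real.exp (r/2) + Real.exp (s/2))^2 := by
  have hβ0 : 0 ≤ β := (abs_nonneg r).trans hr
  have hd : |(s - r)/2| ≤ β := by
    rw [abs_div]
    have := abs_sub s r
    rw [abs_of_pos (by norm_num : (0:ℝ) < 2)]
    linarith
  have h1 := abs_exp_sub_one β ((s-r)/2) hβ1 hd
  have e1 : Real.exp (r/2) * Real.exp ((s-r)/2) = Real.exp (s/2) := by
    rw [← Real.exp_add]; ring_nf
  have e2 : Real.exp (s/2) * Real.exp (s/2) = Real.exp s := by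
    rw [← Real.exp_add]; ring_nf
  have e3 : Real.exp (r/2) * Real.exp (r/2) = Real.exp r := by
    rw [← Real.exp_add]; ring_nf
  have hf : Real.exp s - Real.exp r
      = (Real.exp (r/2) * (Real.exp ((s-r)/2) - 1)) * (Real.exp (s/2) + Real.exp (r/2)) := by
    linear_combination (-(Real.exp (s/2) + Real.exp (r/2))) * e1 - e2 + e3
  rw [hf, abs_mul, abs_mul, abs_of_pos (Real.exp_pos (r/2)),
    abs_of_pos (by positivity : (0:ℝ) < Real.exp (s/2) + Real.exp (r/2))]
  have h2 : Real.exp (r/2) * |Real.exp ((s-r)/2) - 1|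
      ≤ β/2 * (Real.exp (r/2) + Real.exp (s/2)) := by
    nlinarith [mul_le_mul_of_nonneg_left h1 (Real.exp_pos (r/2)).le]
  have h3 : (0:ℝ) < Real.exp (s/2) + Real.exp (r/2) := by positivity
  nlinarith [mul_le_mul_of_nonneg_right h2 h3.le]

set_option maxHeartbeats 1000000 in
lemma tv3 (β x y z r s : ℝ) (hβ1 : β ≤ 1) (hx : 0 ≤ x) (hy : 0 ≤ y) (hz : 0 ≤ z)
    (hA : 0 < x + y + z) (hr : |r| ≤ β) (hs : |s| ≤ β) :
    |x / (x + y + z) - x * Real.exp r / (x * Real.exp r + y + z * Real.exp s)|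
      + |y / (x + y + z) - y / (x * Real.exp r + y + z * Real.exp s)|
      + |z / (x + y + z) - z * Real.exp s / (x * Real.exp r + y + z * Real.exp s)|
      ≤ β := by
  have hβ0 : 0 ≤ β := (abs_nonneg r).trans hr
  have her := Real.exp_pos r
  have hes := Real.exp_pos s
  set A := x + y + z with hAdef
  set B := x * Real.exp r + y + z * Real.exp s with hBdef
  have hB : 0 < B := by
    have h1 : 0 < x ∨ 0 < y ∨ 0 < z := by
      by_contra hc
      push_neg at hc
      linarith [hc.1, hc.2.1, hc.2.2]
    rcases h1 with h | h | h
    · nlinarith [mul_pos h her, mul_nonneg hz hes.le]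
    · nlinarith [mul_nonneg hx her.le, mul_nonneg hz hes.le]
    · nlinarith [mul_pos h hes, mul_nonneg hx her.le]
  have hAB : 0 < A * B := mul_pos hA hB
  have t1 : |x / A - x * Real.exp r / B|
      = |x * B - x * Real.exp r * A| / (A * B) := by
    rw [div_sub_div _ _ hA.ne' hB.ne', abs_div, abs_of_pos hAB]
    congr 2
    ring
  have t2 : |y / A - y / B| = |y * B - y * A| / (A * B) := by
    rw [div_sub_div _ _ hA.ne' hB.ne', abs_div, abs_of_pos hAB]
    congr 2
    ring
  have t3 : |z / A - z * Real.exp s / B|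
      = |z * B - z * Real.exp s * A| / (A * B) := by
    rw [div_sub_div _ _ hA.ne' hB.ne', abs_div, abs_of_pos hAB]
    congr 2
    ring
  rw [t1, t2, t3, ← add_div, ← add_div, div_le_iff₀ hAB]
  have n1 : |x * B - x * Real.exp r * A|
      ≤ x * y * |Real.exp r - 1| + x * z * |Real.exp s - Real.exp r| := by
    have h : x * B - x * Real.exp r * A
        = x * y * (1 - Real.exp r) + x * z * (Real.exp s - Real.exp r) := by
      rw [hAdef, hBdef]; ring
    calc |x * B - x * Real.exp r * A|
        ≤ |x * y * (1 - Real.exp r)| + |x * z * (Real.exp s - Real.exp r)| := by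
          rw [h]; exact abs_add_le _ _
      _ = x * y * |Real.exp r - 1| + x * z * |Real.exp s - Real.exp r| := by
          simp only [abs_mul, abs_of_nonneg hx, abs_of_nonneg hy, abs_of_nonneg hz]
          rw [abs_sub_comm (1:ℝ) (Real.exp r)]
  have n2 : |y * B - y * A|
      ≤ x * y * |Real.exp r - 1| + y * z * |Real.exp s - 1| := by
    have h : y * B - y * A = x * y * (Real.exp r - 1) + y * z * (Real.exp s - 1) := by
      rw [hAdef, hBdef]; ring
    calc |y * B - y * A|
        ≤ |x * y * (Real.exp r - 1)| + |y * z * (Real.exp s - 1)| := by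
          rw [h]; exact abs_add_le _ _
      _ = x * y * |Real.exp r - 1| + y * z * |Real.exp s - 1| := by
          simp only [abs_mul, abs_of_nonneg hx, abs_of_nonneg hy, abs_of_nonneg hz]
  have n3 : |z * B - z * Real.exp s * A|
      ≤ x * z * |Real.exp s - Real.exp r| + y * z * |Real.exp s - 1| := by
    have h : z * B - z * Real.exp s * A
        = x * z * (Real.exp r - Real.exp s) + y * z * (1 - Real.exp s) := by
      rw [hAdef, hBdef]; ring
    calc |z * B - z * Real.exp s * A|
        ≤ |x * z * (Real.exp r - Real.exp s)| + |y * z * (1 - Real.exp s)| := by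
          rw [h]; exact abs_add_le _ _
      _ = x * z * |Real.exp s - Real.exp r| + y * z * |Real.exp s - 1| := by
          simp only [abs_mul, abs_of_nonneg hx, abs_of_nonneg hy, abs_of_nonneg hz]
          rw [abs_sub_comm (Real.exp r) (Real.exp s), abs_sub_comm (1:ℝ) (Real.exp s)]
  have b1 := abs_exp_sub_one β r hβ1 hr
  have b2 := abs_exp_sub_one β s hβ1 hs
  have b3 := abs_exp_sub_exp β r s hβ1 hr hs
  have e2r : Real.exp (r/2) * Real.exp (r/2) = Real.exp r := by
    rw [← Real.exp_add]; ring_nf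
  have e2s : Real.exp (s/2) * Real.exp (s/2) = Real.exp s := by
    rw [← Real.exp_add]; ring_nf
  have amgm : 2 * (x * z) * (Real.exp (r/2) * Real.exp (s/2))
      ≤ x^2 * Real.exp r + z^2 * Real.exp s := by
    nlinarith [sq_nonneg (x * Real.exp (r/2) - z * Real.exp (s/2))]
  have hABexp : A * B = x^2 * Real.exp r + x*y + x*z*Real.exp s
      + x*y*Real.exp r + y^2 + y*z*Real.exp s
      + x*z*Real.exp r + y*z + z^2*Real.exp s := by
    rw [hAdef, hBdef]; ring
  calc |x * B - x * Real.exp r * A| + |y * B - y * A| + |z * B - z * Real.exp s * A|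
      ≤ 2 * (x*y) * |Real.exp r - 1| + 2 * (y*z) * |Real.exp s - 1|
        + 2 * (x*z) * |Real.exp s - Real.exp r| := by linarith
    _ ≤ 2 * (x*y) * (β/2 * (1 + Real.exp r)) + 2 * (y*z) * (β/2 * (1 + Real.exp s))
        + 2 * (x*z) * (β/2 * (Real.exp (r/2) + Real.exp (s/2))^2) := by
        gcongr <;> positivity
    _ ≤ β * (A * B) := by
        rw [hABexp]
        have hsq : (Real.exp (r/2) + Real.exp (s/2))^2
            = Real.exp r + 2 * (Real.exp (r/2) * Real.exp (s/2)) + Real.exp s := by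
          rw [← e2r, ← e2s]; ring
        rw [hsq]
        nlinarith [mul_le_mul_of_nonneg_left amgm hβ0, mul_nonneg hβ0 (sq_nonneg y)]

lemma spin_sum (f : ℤ → ℝ) : ∑ s ∈ Spin, f s = f (-1) + f 0 + f 1 := by
  show ∑ s ∈ ({-1, 0, 1} : Finset ℤ), f s = _
  rw [Finset.sum_insert (by decide), Finset.sum_insert (by decide), Finset.sum_singleton]
  ring

lemma clash_zero {d : ℕ} (i : Site d) (ω : Site d → Spin) : clashCount i 0 ω = 0 := by
  unfold clashCount
  simp

lemma abs_sum_sub_le_one {ι : Type*} (s : Finset ι) (f g : ι → ℝ) (P : ι → Prop)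
    [DecidablePred P]
    (h1 : ∀ p ∈ s, ¬ P p → f p = g p)
    (h2 : ∀ p ∈ s, P p → ∀ q ∈ s, P q → p = q)
    (h3 : ∀ p ∈ s, |f p - g p| ≤ 1) :
    |∑ p ∈ s, f p - ∑ p ∈ s, g p| ≤ 1 := by
  rw [← Finset.sum_sub_distrib]
  rw [← Finset.sum_filter_of_ne (p := P) (fun x hx hne => by
    by_contra hP
    exact hne (by rw [h1 x hx hP]; ring))]
  have hcard : (s.filter P).card ≤ 1 := Finset.card_le_one.2 (fun a ha b hb => by
    obtain ⟨ha1, ha2⟩ := Finset.mem_filter.1 ha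
    obtain ⟨hb1, hb2⟩ := Finset.mem_filter.1 hb
    exact h2 a ha1 ha2 b hb1 hb2)
  calc |∑ p ∈ s.filter P, (f p - g p)| ≤ ∑ p ∈ s.filter P, |f p - g p| :=
        Finset.abs_sum_le_sum_abs _ _
    _ ≤ (s.filter P).card • (1:ℝ) :=
        Finset.sum_le_card_nsmul _ _ 1 (fun p hp => h3 p (Finset.mem_of_mem_filter p hp))
    _ = (s.filter P).card := by simp
    _ ≤ 1 := by exact_mod_cast hcard

lemma clash_rw {d : ℕ} (i : Site d) (σ : ℤ) (ζ : Site d → Spin) :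
    clashCount i σ ζ = ∑ p ∈ (Finset.univ ×ˢ ({-1, 1} : Finset ℤ)),
      (if σ * (ζ (Function.update i p.1 (i p.1 + p.2)) : ℤ) = -1 then (1 : ℝ) else 0) := by
  rw [clashCount, Finset.sum_product]

lemma update_inj {d : ℕ} (i j : Site d) (a b : Fin d × ℤ) (ha2 : a.2 ≠ 0)
    (haj : Function.update i a.1 (i a.1 + a.2) = j)
    (hbj : Function.update i b.1 (i b.1 + b.2) = j) : a = b := by
  have hab := haj.trans hbj.symm
  have h1 := congrFun hab a.1
  rw [Function.update_self] at h1
  by_cases hc : a.1 = b.1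
  · rw [hc] at h1
    rw [Function.update_self] at h1
    exact Prod.ext hc (by omega)
  · rw [Function.update_of_ne hc] at h1
    omega

lemma clash_diff {d : ℕ} (i j : Site d) (σ : ℤ) (ω η : Site d → Spin)
    (h : ∀ k, k ≠ j → ω k = η k) :
    |clashCount i σ ω - clashCount i σ η| ≤ 1 := by
  classical
  rw [clash_rw i σ ω, clash_rw i σ η]
  refine abs_sum_sub_le_one _ _ _
    (fun p => Function.update i p.1 (i p.1 + p.2) = j) ?_ ?_ ?_
  · intro p _ hP
    rw [h _ hP]
  · intro p hp hP q hq hQ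
    have hp2 : p.2 ≠ 0 := by
      have := (Finset.mem_product.1 hp).2
      simp only [Finset.mem_insert, Finset.mem_singleton] at this
      omega
    exact update_inj i j p q hp2 hP hQ
  · intro p _
    split_ifs <;> norm_num

/-- The finite set of nearest neighbors of `i`. -/
noncomputable def nbrFinset {d : ℕ} (i : Site d) : Finset (Site d) :=
  (Finset.univ ×ˢ ({-1, 1} : Finset ℤ)).image
    (fun p : Fin d × ℤ => Function.update i p.1 (i p.1 + p.2))

lemma clash_eq_of_not_nbr {d : ℕ} (i j : Site d) (hj : j ∉ nbrFinset i) (σ : ℤ)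
    (ω η : Site d → Spin) (h : ∀ k, k ≠ j → ω k = η k) :
    clashCount i σ ω = clashCount i σ η := by
  unfold clashCount
  refine Finset.sum_congr rfl fun k _ => Finset.sum_congr rfl fun ε hε => ?_
  have hne : Function.update i k (i k + ε) ≠ j := fun he =>
    hj (Finset.mem_image.2 ⟨(k, ε), Finset.mem_product.2 ⟨Finset.mem_univ _, hε⟩, he⟩)
  rw [h _ hne]

lemma kernel_tv {d : ℕ} (β : ℝ) (hβ0 : 0 ≤ β) (hβ1 : β ≤ 1) (α : ℤ → ℝ)
    (hα : IsProbVec α) (i j : Site d) (ω η : Site d → Spin)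
    (h : ∀ k, k ≠ j → ω k = η k) :
    tvDist (scKernel β α i ω) (scKernel β α i η) ≤ β / 2 := by
  set x := α (-1) * Real.exp (-β * clashCount i (-1) ω) with hxdef
  set y := α 0 with hydef
  set z := α 1 * Real.exp (-β * clashCount i 1 ω) with hzdef
  set r := β * (clashCount i (-1) ω - clashCount i (-1) η) with hrdef
  set s := β * (clashCount i 1 ω - clashCount i 1 η) with hsdef
  have hx : 0 ≤ x := mul_nonneg (hα.1 _) (Real.exp_pos _).le
  have hy : 0 ≤ y := hα.1 _
  have hz : 0 ≤ z := mul_nonneg (hα.1 _) (Real.exp_pos _).le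
  have hxr : α (-1) * Real.exp (-β * clashCount i (-1) η) = x * Real.exp r := by
    rw [hxdef, mul_assoc, ← Real.exp_add, hrdef]
    congr 2
    ring
  have hzs : α 1 * Real.exp (-β * clashCount i 1 η) = z * Real.exp s := by
    rw [hzdef, mul_assoc, ← Real.exp_add, hsdef]
    congr 2
    ring
  have hy0 : α 0 * Real.exp (-β * clashCount i 0 ω) = y := by
    rw [clash_zero]; simp [hydef]
  have hy0' : α 0 * Real.exp (-β * clashCount i 0 η) = y := by
    rw [clash_zero]; simp [hydef]
  have hden : ∑ σ' ∈ Spin, α σ' * Real.exp (-β * clashCount i σ' ω) = x + y + z := by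
    rw [spin_sum, hy0]
  have hden' : ∑ σ' ∈ Spin, α σ' * Real.exp (-β * clashCount i σ' η)
      = x * Real.exp r + y + z * Real.exp s := by
    rw [spin_sum, hy0', hxr, hzs]
  have hsum : α (-1) + α 0 + α 1 = 1 := by
    have := hα.2.2
    rwa [spin_sum] at this
  have hA : 0 < x + y + z := by
    have hpos : 0 < α (-1) ∨ 0 < α 0 ∨ 0 < α 1 := by
      by_contra hc
      push_neg at hc
      linarith [hc.1, hc.2.1, hc.2.2]
    rcases hpos with hp | hp | hp
    · have : 0 < x := mul_pos hp (Real.exp_pos _)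
      linarith
    · have : 0 < y := hp
      linarith
    · have : 0 < z := mul_pos hp (Real.exp_pos _)
      linarith
  have hr : |r| ≤ β := by
    rw [hrdef, abs_mul, abs_of_nonneg hβ0]
    calc β * |clashCount i (-1) ω - clashCount i (-1) η| ≤ β * 1 :=
          mul_le_mul_of_nonneg_left (clash_diff i j (-1) ω η h) hβ0
      _ = β := mul_one β
  have hs : |s| ≤ β := by
    rw [hsdef, abs_mul, abs_of_nonneg hβ0]
    calc β * |clashCount i 1 ω - clashCount i 1 η| ≤ β * 1 :=
          mul_le_mul_of_nonneg_left (clash_diff i j 1 ω η h) hβ0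
      _ = β := mul_one β
  have hP1 : scKernel β α i ω (-1) = x / (x + y + z) := by
    rw [scKernel, hden]
  have hP0 : scKernel β α i ω 0 = y / (x + y + z) := by
    rw [scKernel, hden, hy0]
  have hP2 : scKernel β α i ω 1 = z / (x + y + z) := by
    rw [scKernel, hden]
  have hQ1 : scKernel β α i η (-1)
      = x * Real.exp r / (x * Real.exp r + y + z * Real.exp s) := by
    rw [scKernel, hden', hxr]
  have hQ0 : scKernel β α i η 0
      = y / (x * Real.exp r + y + z * Real.exp s) := by
    rw [scKernel, hden', hy0']
  have hQ2 : scKernel β α i η 1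
      = z * Real.exp s / (x * Real.exp r + y + z * Real.exp s) := by
    rw [scKernel, hden', hzs]
  have htv := tv3 β x y z r s hβ1 hx hy hz hA hr hs
  rw [tvDist, spin_sum, hP1, hP0, hP2, hQ1, hQ0, hQ2]
  linarith

lemma dob_le {d : ℕ} (β : ℝ) (hβ0 : 0 ≤ β) (hβ1 : β ≤ 1) (α : ℤ → ℝ)
    (hα : IsProbVec α) (i j : Site d) : dobMatrix β α i j ≤ β / 2 := by
  apply Real.sSup_le
  · rintro r ⟨ω, η, hwe, rfl⟩
    exact kernel_tv β hβ0 hβ1 α hα i j ω η hwe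
  · positivity

lemma dob_zero {d : ℕ} (β : ℝ) (hβ0 : 0 ≤ β) (hβ1 : β ≤ 1) (α : ℤ → ℝ)
    (hα : IsProbVec α) (i j : Site d) (hj : j ∉ nbrFinset i) :
    dobMatrix β α i j = 0 := by
  have hall : ∀ r ∈ {r : ℝ | ∃ ω η : Site d → Spin, (∀ k, k ≠ j → ω k = η k) ∧
      r = tvDist (scKernel β α i ω) (scKernel β α i η)}, r = 0 := by
    rintro r ⟨ω, η, hwe, rfl⟩
    have hck : ∀ σ, clashCount i σ ω = clashCount i σ η :=
      fun σ => clash_eq_of_not_nbr i j hj σ ω η hwe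
    simp [tvDist, scKernel, hck]
  have hmem : (0:ℝ) ∈ {r : ℝ | ∃ ω η : Site d → Spin, (∀ k, k ≠ j → ω k = η k) ∧
      r = tvDist (scKernel β α i ω) (scKernel β α i η)} := by
    refine ⟨fun _ => ⟨0, by decide⟩, fun _ => ⟨0, by decide⟩, fun _ _ => rfl, ?_⟩
    simp [tvDist]
  refine le_antisymm (Real.sSup_le (fun r hr => le_of_eq (hall r hr)) le_rfl) ?_
  exact le_csSup ⟨0, fun r hr => le_of_eq (hall r hr)⟩ hmem

end Aux

/-- For `0 ≤ β` with `β·d < 1`, the soft-core Widom-Rowlinson model on `ℤ^d`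
satisfies the Dobrushin uniqueness condition for every a priori measure `α`. -/
theorem dobrushin_small_beta (d : ℕ) (hd : 1 ≤ d) (β : ℝ) (hβ : 0 ≤ β)
    (hβd : β * d < 1) (α : ℤ → ℝ) (hα : IsProbVec α) :
    dobConstant β α d < 1 := by
  have hd1 : (1:ℝ) ≤ d := by exact_mod_cast hd
  have hβ1 : β ≤ 1 := by nlinarith
  have key : ∀ i : Site d,
      (∑' j : Site d, if j = i then (0:ℝ) else dobMatrix β α i j) ≤ β * d := by
    intro i
    have hsupp : ∀ j ∉ nbrFinset i, (if j = i then (0:ℝ) else dobMatrix β α i j) = 0 := by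
      intro j hj
      by_cases hji : j = i
      · simp [hji]
      · simp only [hji, if_false]
        exact dob_zero β hβ hβ1 α hα i j hj
    rw [tsum_eq_sum hsupp]
    have hcard : (nbrFinset i).card ≤ d * 2 := by
      refine le_trans Finset.card_image_le ?_
      rw [Finset.card_product]
      simp
    calc ∑ j ∈ nbrFinset i, (if j = i then (0:ℝ) else dobMatrix β α i j)
        ≤ ∑ _j ∈ nbrFinset i, β/2 := by
          refine Finset.sum_le_sum (fun j _ => ?_)
          by_cases hji : j = i
          · simp only [hji, if_true]
            positivity
          · simp only [hji, if_false]
            exact dob_le β hβ hβ1 α hα i j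
      _ = (nbrFinset i).card * (β/2) := by rw [Finset.sum_const, nsmul_eq_mul]
      _ ≤ ((d * 2 : ℕ) : ℝ) * (β/2) := by
          refine mul_le_mul_of_nonneg_right ?_ (by positivity)
          exact_mod_cast hcard
      _ = β * d := by push_cast; ring
  have : dobConstant β α d ≤ β * d := ciSup_le key
  linarith
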